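/- Let 0 < γ < 1 < r ≤ 2 and let c_{γ,r} = max{c_r, c_r^{(γ)}}, where c_r = inf{ c > 0 : exp(x − c x^r) ≤ 1 + x for all x ≥ 0 } and c_r^{(γ)} = inf{ c > 0 : exp(x − c|x|^r) ≤ 1 + x for all −γ ≤ x ≤ 0 }. Let (d_n) be a sequence of integrable random variables adapted to a filtration (F_n) such that E(d_n | F_{n−1}) ≤ 0 a.s. and d_n ≥ −M a.s. for all n, for some constant M > 0. Let A_n = Σ_{i=1}^n d_i, B_n = ( r·c_{γ,r}·Σ_{i=1}^n |d_i|^r )^{1/r}, with A₀ = B₀ = 0. Then for every 0 ≤ λ ≤ γ·M⁻¹, the process ( exp( λA_n − (λB_n)^r/r ) )_{n ≥ 0} is a supermartingale with respect to (F_n). -/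

import Mathlib

open MeasureTheory

section Aux

/-- `c = 1` works on the positive side. -/
private lemma aux_mem_pos {r : ℝ} (hr1 : 1 < r) (hr2 : r ≤ 2) :
    (1 : ℝ) ∈ {c : ℝ | 0 < c ∧ ∀ x ≥ (0 : ℝ), Real.exp (x - c * x ^ r) ≤ 1 + x} := by
  refine ⟨one_pos, fun x hx => ?_⟩
  rcases eq_or_lt_of_le hx with h0 | h0
  · simp [← h0, Real.zero_rpow (by linarith : r ≠ 0)]
  have h1x : (0 : ℝ) < 1 + x := by linarith
  rw [← Real.le_log_iff_exp_le h1x]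
  have hlog : 1 - (1 + x)⁻¹ ≤ Real.log (1 + x) := Real.one_sub_inv_le_log_of_pos h1x
  have hfrac : 1 - (1 + x)⁻¹ = x / (1 + x) := by field_simp; ring
  rw [hfrac] at hlog
  -- suffices x - x^r ≤ x/(1+x), i.e. x^2 ≤ x^r * (1+x)
  have hx2 : x * x ≤ x ^ r * (1 + x) := by
    rcases le_or_gt x 1 with hx1 | hx1
    · have h2 : x * x ≤ x ^ r := by
        have hsq : x ^ (2 : ℝ) = x * x := by
          rw [show (2 : ℝ) = (1 : ℝ) + 1 by norm_num, Real.rpow_add h0, Real.rpow_one]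
        exact hsq ▸ Real.rpow_le_rpow_of_exponent_ge h0 hx1 hr2
      nlinarith [h2, Real.rpow_nonneg (le_of_lt h0) r, le_of_lt h0]
    · have h3 : x * x ≤ x ^ r * x := by
        have hsq : x ^ (2 : ℝ) = x * x := by
          rw [show (2 : ℝ) = (1 : ℝ) + 1 by norm_num, Real.rpow_add h0, Real.rpow_one]
        have h2 : x ^ (r + 1) = x ^ r * x := by
          rw [Real.rpow_add h0, Real.rpow_one]
        exact hsq ▸ (h2 ▸ Real.rpow_le_rpow_of_exponent_le (le_of_lt hx1) (by linarith))
      nlinarith [h3, Real.rpow_nonneg (le_of_lt h0) r]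
  have : x - 1 * x ^ r ≤ x / (1 + x) := by
    rw [one_mul, sub_le_iff_le_add, div_add' _ _ _ (ne_of_gt h1x), le_div_iff₀ h1x]
    nlinarith
  linarith

/-- `c = (1-γ)⁻¹` works on the negative side. -/
private lemma aux_mem_neg {γ r : ℝ} (hγ0 : 0 < γ) (hγ1 : γ < 1) (hr1 : 1 < r) (hr2 : r ≤ 2) :
    (1 - γ)⁻¹ ∈ {c : ℝ | 0 < c ∧
      ∀ x : ℝ, -γ ≤ x → x ≤ 0 → Real.exp (x - c * |x| ^ r) ≤ 1 + x} := by
  have h1γ : (0 : ℝ) < 1 - γ := by linarith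
  refine ⟨inv_pos.mpr h1γ, fun x hxγ hx0 => ?_⟩
  rcases eq_or_lt_of_le hx0 with h0 | h0
  · simp [h0, Real.zero_rpow (by linarith : r ≠ 0)]
  set t : ℝ := -x with ht
  have hxt : x = -t := by rw [ht]; ring
  have ht0 : 0 < t := by rw [ht]; linarith
  have htγ : t ≤ γ := by rw [ht]; linarith
  have h1x : (0 : ℝ) < 1 + x := by linarith
  have habs : |x| = t := by rw [abs_of_neg h0]
  rw [← Real.le_log_iff_exp_le h1x, habs]
  have hlog : 1 - (1 + x)⁻¹ ≤ Real.log (1 + x) := Real.one_sub_inv_le_log_of_pos h1x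
  have hfrac : 1 - (1 + x)⁻¹ = x / (1 + x) := by field_simp; ring
  rw [hfrac] at hlog
  have ht1 : t ≤ 1 := le_trans htγ (le_of_lt hγ1)
  have h2 : t * t ≤ t ^ r := by
    have hsq : t ^ (2 : ℝ) = t * t := by
      rw [show (2 : ℝ) = (1 : ℝ) + 1 by norm_num, Real.rpow_add ht0, Real.rpow_one]
    exact hsq ▸ Real.rpow_le_rpow_of_exponent_ge ht0 ht1 hr2
  have h6 : 1 ≤ (1 - γ)⁻¹ * (1 - t) := by
    rw [inv_mul_eq_div, le_div_iff₀ h1γ]; linarith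
  have key : x * x ≤ (1 - γ)⁻¹ * t ^ r * (1 + x) := by
    have h1xt : 1 + x = 1 - t := by rw [hxt]; ring
    have hxx : x * x = t * t := by rw [hxt]; ring
    rw [h1xt, hxx]
    nlinarith [h2, mul_le_mul_of_nonneg_left h6 (Real.rpow_nonneg (le_of_lt ht0) r)]
  have : x - (1 - γ)⁻¹ * t ^ r ≤ x / (1 + x) := by
    rw [le_div_iff₀ h1x]
    nlinarith [key]
  linarith

/-- The key pointwise inequality at the infimum constant. -/
private lemma aux_key {γ r : ℝ} (hγ0 : 0 < γ) (hγ1 : γ < 1) (hr1 : 1 < r) (hr2 : r ≤ 2)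
    {c : ℝ}
    (hc : max (sInf {c : ℝ | 0 < c ∧ ∀ x ≥ (0 : ℝ), Real.exp (x - c * x ^ r) ≤ 1 + x})
      (sInf {c : ℝ | 0 < c ∧
        ∀ x : ℝ, -γ ≤ x → x ≤ 0 → Real.exp (x - c * |x| ^ r) ≤ 1 + x}) ≤ c)
    {x : ℝ} (hx : -γ ≤ x) : Real.exp (x - c * |x| ^ r) ≤ 1 + x := by
  rcases le_or_gt 0 x with hx0 | hx0
  · rcases eq_or_lt_of_le hx0 with h0 | h0
    · simp [← h0, Real.zero_rpow (by linarith : r ≠ 0)]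
    have h1x : (0 : ℝ) < 1 + x := by linarith
    have hxr : (0 : ℝ) < x ^ r := Real.rpow_pos_of_pos h0 r
    rw [abs_of_pos h0, ← Real.le_log_iff_exp_le h1x]
    have hlb : (x - Real.log (1 + x)) / x ^ r ≤
        sInf {c : ℝ | 0 < c ∧ ∀ x ≥ (0 : ℝ), Real.exp (x - c * x ^ r) ≤ 1 + x} := by
      refine le_csInf ⟨1, aux_mem_pos hr1 hr2⟩ (fun b hb => ?_)
      have := hb.2 x hx0
      rw [← Real.le_log_iff_exp_le h1x] at this
      rw [div_le_iff₀ hxr]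
      linarith
    have h1 : (x - Real.log (1 + x)) / x ^ r ≤ c := le_trans hlb (le_trans (le_max_left _ _) hc)
    rw [div_le_iff₀ hxr] at h1
    linarith
  · have h1x : (0 : ℝ) < 1 + x := by linarith
    have habs : |x| = -x := abs_of_neg hx0
    have hxr : (0 : ℝ) < |x| ^ r := Real.rpow_pos_of_pos (by rw [habs]; linarith) r
    rw [← Real.le_log_iff_exp_le h1x]
    have hlb : (x - Real.log (1 + x)) / |x| ^ r ≤
        sInf {c : ℝ | 0 < c ∧
          ∀ x : ℝ, -γ ≤ x → x ≤ 0 → Real.exp (x - c * |x| ^ r) ≤ 1 + x} := by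
      refine le_csInf ⟨(1 - γ)⁻¹, aux_mem_neg hγ0 hγ1 hr1 hr2⟩ (fun b hb => ?_)
      have := hb.2 x hx (le_of_lt hx0)
      rw [← Real.le_log_iff_exp_le h1x] at this
      rw [div_le_iff₀ hxr]
      linarith
    have h1 : (x - Real.log (1 + x)) / |x| ^ r ≤ c := le_trans hlb (le_trans (le_max_right _ _) hc)
    rw [div_le_iff₀ hxr] at h1
    linarith

/-- The infimum constant on the negative side is positive. -/
private lemma aux_pos {γ r : ℝ} (hγ0 : 0 < γ) (hγ1 : γ < 1) (hr1 : 1 < r) (hr2 : r ≤ 2) :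
    0 < sInf {c : ℝ | 0 < c ∧
      ∀ x : ℝ, -γ ≤ x → x ≤ 0 → Real.exp (x - c * |x| ^ r) ≤ 1 + x} := by
  have h1γ : (0 : ℝ) < 1 - γ := by linarith
  have hγr : (0 : ℝ) < γ ^ r := Real.rpow_pos_of_pos hγ0 r
  have hne : (1 : ℝ) - γ ≠ 1 := by intro h; linarith
  have hlog : Real.log (1 - γ) < -γ := by
    have := Real.log_lt_sub_one_of_pos h1γ hne
    linarith
  refine lt_of_lt_of_le (b := (-γ - Real.log (1 - γ)) / γ ^ r) ?_ ?_
  · apply div_pos; linarith; exact hγr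
  · refine le_csInf ⟨(1 - γ)⁻¹, aux_mem_neg hγ0 hγ1 hr1 hr2⟩ (fun b hb => ?_)
    have := hb.2 (-γ) le_rfl (by linarith)
    rw [← Real.le_log_iff_exp_le (by linarith : (0:ℝ) < 1 + -γ)] at this
    have habs : |(-γ)| = γ := by rw [abs_of_neg (by linarith : -γ < 0)]; ring
    rw [habs] at this
    rw [div_le_iff₀ hγr]
    have h1 : 1 + -γ = 1 - γ := by ring
    rw [h1] at this
    linarith

/-- Uniform upper bound for `x - c|x|^r`. -/
private lemma aux_bound {c r : ℝ} (hc : 0 < c) (hr1 : 1 < r) (x : ℝ) :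
    x - c * |x| ^ r ≤ c⁻¹ ^ (1 / (r - 1)) := by
  set T : ℝ := c⁻¹ ^ (1 / (r - 1)) with hT
  have hr0 : 0 < r - 1 := by linarith
  have hT0 : 0 < T := Real.rpow_pos_of_pos (inv_pos.mpr hc) _
  rcases le_or_gt x 0 with hx | hx
  · have : 0 ≤ c * |x| ^ r := mul_nonneg (le_of_lt hc) (Real.rpow_nonneg (abs_nonneg x) r)
    linarith
  rcases le_or_gt x T with hxT | hxT
  · have : 0 ≤ c * |x| ^ r := mul_nonneg (le_of_lt hc) (Real.rpow_nonneg (abs_nonneg x) r)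
    linarith
  · -- x > T, so c x^{r-1} > 1 hence c x^r ≥ x
    have habs : |x| = x := abs_of_pos hx
    have h1 : T ^ (r - 1) = c⁻¹ := by
      rw [hT, ← Real.rpow_mul (le_of_lt (inv_pos.mpr hc)), one_div,
        inv_mul_cancel₀ (ne_of_gt hr0), Real.rpow_one]
    have h2 : c⁻¹ < x ^ (r - 1) := by
      rw [← h1]
      exact Real.rpow_lt_rpow (le_of_lt hT0) hxT hr0
    have h3 : 1 < c * x ^ (r - 1) := by
      have := mul_lt_mul_of_pos_left h2 hc
      rwa [mul_inv_cancel₀ (ne_of_gt hc)] at this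
    have h4 : x ^ (r - 1) * x = x ^ r := by
      rw [← Real.rpow_add_one (ne_of_gt hx) (r - 1)]
      norm_num
    have h5 : x ≤ c * x ^ r := by
      rw [← h4]
      calc x = 1 * x := (one_mul x).symm
        _ ≤ c * x ^ (r - 1) * x := by
            exact mul_le_mul_of_nonneg_right (le_of_lt h3) (le_of_lt hx)
        _ = c * (x ^ (r - 1) * x) := by ring
    rw [habs]
    linarith

end Aux

/-- Lemma 3.9(ii). -/
theorem stmt_9 {Ω : Type*} {mΩ : MeasurableSpace Ω} {μ : Measure Ω}
    [IsProbabilityMeasure μ] (ℱ : Filtration ℕ mΩ)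
    (γ r M : ℝ) (hγ0 : 0 < γ) (hγ1 : γ < 1) (hr1 : 1 < r) (hr2 : r ≤ 2) (hM : 0 < M)
    (d : ℕ → Ω → ℝ)
    (hadp : ∀ n, StronglyMeasurable[ℱ (n + 1)] (d (n + 1)))
    (hint : ∀ n, Integrable (d (n + 1)) μ)
    (hcond : ∀ n, ∀ᵐ ω ∂μ, (μ[d (n + 1) | ℱ n]) ω ≤ 0)
    (hbdd : ∀ n, ∀ᵐ ω ∂μ, -M ≤ d (n + 1) ω)
    (lam : ℝ) (hlam0 : 0 ≤ lam) (hlam : lam ≤ γ * M⁻¹) :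
    let cr : ℝ := sInf {c : ℝ | 0 < c ∧ ∀ x ≥ (0 : ℝ), Real.exp (x - c * x ^ r) ≤ 1 + x}
    let crγ : ℝ := sInf {c : ℝ | 0 < c ∧
      ∀ x : ℝ, -γ ≤ x → x ≤ 0 → Real.exp (x - c * |x| ^ r) ≤ 1 + x}
    let cγr : ℝ := max cr crγ
    Supermartingale
      (fun n ω => Real.exp (lam * (∑ i ∈ Finset.range n, d (i + 1) ω) -
        (lam * (r * cγr * ∑ i ∈ Finset.range n, |d (i + 1) ω| ^ r) ^ (1 / r)) ^ r / r))
      ℱ μ := by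
  intro cr crγ cγr
  have hr0 : (0 : ℝ) < r := by linarith
  -- positivity of the constant
  have hcrγ_nonneg : 0 ≤ crγ := le_of_lt (aux_pos hγ0 hγ1 hr1 hr2)
  have hc_pos : 0 < cγr := lt_of_lt_of_le (aux_pos hγ0 hγ1 hr1 hr2) (le_max_right _ _)
  -- the key pointwise inequality
  have hkey : ∀ x : ℝ, -γ ≤ x → Real.exp (x - cγr * |x| ^ r) ≤ 1 + x :=
    fun x hx => aux_key hγ0 hγ1 hr1 hr2 le_rfl hx
  -- the summand processes
  set g : ℕ → Ω → ℝ := fun i ω => lam * d (i + 1) ω - cγr * |lam * d (i + 1) ω| ^ r with hg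
  -- simplification of the exponent
  have hexp : ∀ n ω,
      lam * (∑ i ∈ Finset.range n, d (i + 1) ω) -
        (lam * (r * cγr * ∑ i ∈ Finset.range n, |d (i + 1) ω| ^ r) ^ (1 / r)) ^ r / r
      = ∑ i ∈ Finset.range n, g i ω := by
    intro n ω
    have hS : (0 : ℝ) ≤ ∑ i ∈ Finset.range n, |d (i + 1) ω| ^ r :=
      Finset.sum_nonneg fun i _ => Real.rpow_nonneg (abs_nonneg _) r
    have hK : (0 : ℝ) ≤ r * cγr * ∑ i ∈ Finset.range n, |d (i + 1) ω| ^ r :=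
      mul_nonneg (mul_nonneg (le_of_lt hr0) (le_of_lt hc_pos)) hS
    have h1 : (lam * (r * cγr * ∑ i ∈ Finset.range n, |d (i + 1) ω| ^ r) ^ (1 / r)) ^ r
        = lam ^ r * (r * cγr * ∑ i ∈ Finset.range n, |d (i + 1) ω| ^ r) := by
      rw [Real.mul_rpow hlam0 (Real.rpow_nonneg hK _), ← Real.rpow_mul hK,
        one_div, inv_mul_cancel₀ (ne_of_gt hr0), Real.rpow_one]
    rw [h1]
    have h2 : ∀ i, |lam * d (i + 1) ω| ^ r = lam ^ r * |d (i + 1) ω| ^ r := by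
      intro i
      rw [abs_mul, abs_of_nonneg hlam0, Real.mul_rpow hlam0 (abs_nonneg _)]
    have h3 : ∀ i ∈ Finset.range n, lam * d (i + 1) ω - cγr * |lam * d (i + 1) ω| ^ r
        = lam * d (i + 1) ω - cγr * lam ^ r * |d (i + 1) ω| ^ r := fun i _ => by
      rw [h2 i]; ring
    rw [Finset.sum_congr rfl h3, Finset.sum_sub_distrib, ← Finset.mul_sum, ← Finset.mul_sum]
    have hrne : r ≠ 0 := ne_of_gt hr0
    field_simp
  -- uniform bound on the summands
  set T : ℝ := cγr⁻¹ ^ (1 / (r - 1)) with hT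
  have hT0 : 0 < T := Real.rpow_pos_of_pos (inv_pos.mpr hc_pos) _
  have hgT : ∀ i ω, g i ω ≤ T := fun i ω => aux_bound hc_pos hr1 _
  -- measurability of summands w.r.t. ℱ n when i < n
  have hF : Continuous (fun y : ℝ => lam * y - cγr * |lam * y| ^ r) := by
    have h1 : Continuous (fun y : ℝ => lam * y) := continuous_const.mul continuous_id
    have h2 : Continuous (fun y : ℝ => |lam * y| ^ r) :=
      (Real.continuous_rpow_const (le_of_lt hr0)).comp (continuous_abs.comp h1)
    exact h1.sub (continuous_const.mul h2)
  have hgm : ∀ n, ∀ i < n, StronglyMeasurable[ℱ n] (g i) := fun n i hi =>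
    hF.comp_stronglyMeasurable ((hadp i).mono (ℱ.mono hi))
  have hfm : ∀ n, StronglyMeasurable[ℱ n]
      (fun ω => Real.exp (∑ i ∈ Finset.range n, g i ω)) := fun n =>
    Real.continuous_exp.comp_stronglyMeasurable
      (by simpa [Finset.sum_fn] using Finset.stronglyMeasurable_sum (Finset.range n) fun i hi => hgm n i (Finset.mem_range.mp hi))
  -- rewrite the process
  have hfeq : (fun n ω => Real.exp (lam * (∑ i ∈ Finset.range n, d (i + 1) ω) -
      (lam * (r * cγr * ∑ i ∈ Finset.range n, |d (i + 1) ω| ^ r) ^ (1 / r)) ^ r / r))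
      = fun n ω => Real.exp (∑ i ∈ Finset.range n, g i ω) := by
    funext n ω; rw [hexp n ω]
  rw [hfeq]
  set f : ℕ → Ω → ℝ := fun n ω => Real.exp (∑ i ∈ Finset.range n, g i ω) with hf
  -- boundedness and integrability
  have hfbd : ∀ n ω, ‖f n ω‖ ≤ Real.exp (n * T) := by
    intro n ω
    rw [Real.norm_eq_abs, abs_of_pos (Real.exp_pos _), Real.exp_le_exp]
    calc ∑ i ∈ Finset.range n, g i ω ≤ ∑ i ∈ Finset.range n, T :=
          Finset.sum_le_sum fun i _ => hgT i ω
      _ = n * T := by rw [Finset.sum_const, Finset.card_range, nsmul_eq_mul]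
  have hfint : ∀ n, Integrable (f n) μ := by
    intro n
    exact ⟨((hfm n).mono (ℱ.le n)).aestronglyMeasurable,
      HasFiniteIntegral.of_bounded (ae_of_all μ (hfbd n))⟩
  refine supermartingale_nat (fun n => hfm n) hfint ?_
  intro n
  -- the increment factor
  set Y : Ω → ℝ := fun ω => Real.exp (g n ω) with hY
  have hfsucc : f (n + 1) = fun ω => f n ω * Y ω := by
    funext ω
    rw [hf, hY]
    simp only [Finset.sum_range_succ, Real.exp_add]
  have hYbd : ∀ ω, ‖Y ω‖ ≤ Real.exp T := by
    intro ω
    rw [Real.norm_eq_abs, abs_of_pos (Real.exp_pos _), Real.exp_le_exp]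
    exact hgT n ω
  have hYm : AEStronglyMeasurable Y μ :=
    ((Real.continuous_exp.comp hF).comp_stronglyMeasurable
      ((hadp n).mono (ℱ.le (n + 1)))).aestronglyMeasurable
  have hYint : Integrable Y μ := ⟨hYm, HasFiniteIntegral.of_bounded (ae_of_all μ hYbd)⟩
  have hfYint : Integrable (f n * Y) μ := by
    have : f n * Y = f (n + 1) := by rw [hfsucc]; rfl
    rw [this]; exact hfint (n + 1)
  -- Y ≤ 1 + lam * d a.e.
  have hlamM : lam * M ≤ γ := by
    calc lam * M ≤ γ * M⁻¹ * M := mul_le_mul_of_nonneg_right hlam (le_of_lt hM)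
      _ = γ := by field_simp
  have hYle : ∀ᵐ ω ∂μ, Y ω ≤ 1 + lam * d (n + 1) ω := by
    filter_upwards [hbdd n] with ω hω
    refine hkey (lam * d (n + 1) ω) ?_
    have : lam * (-M) ≤ lam * d (n + 1) ω := mul_le_mul_of_nonneg_left hω hlam0
    nlinarith
  -- conditional expectation computation
  have h1int : Integrable (fun ω => 1 + lam * d (n + 1) ω) μ :=
    (integrable_const 1).add ((hint n).const_mul lam)
  have hcond1 : μ[Y | ℱ n] ≤ᵐ[μ] 1 := by
    have hmono : μ[Y | ℱ n] ≤ᵐ[μ] μ[fun ω => 1 + lam * d (n + 1) ω | ℱ n] :=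
      condExp_mono hYint h1int hYle
    have hadd : μ[fun ω => 1 + lam * d (n + 1) ω | ℱ n]
        =ᵐ[μ] μ[fun _ => (1 : ℝ) | ℱ n] + μ[fun ω => lam * d (n + 1) ω | ℱ n] :=
      condExp_add (integrable_const 1) ((hint n).const_mul lam) (ℱ n)
    have hconst : μ[fun _ => (1 : ℝ) | ℱ n] = fun _ => (1 : ℝ) := condExp_const (ℱ.le n) 1
    have hsmul : μ[fun ω => lam * d (n + 1) ω | ℱ n] =ᵐ[μ] fun ω => lam * (μ[d (n + 1) | ℱ n]) ω := by
      have := condExp_smul (μ := μ) (m := ℱ n) lam (d (n + 1))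
      simpa [Pi.smul_def, smul_eq_mul] using this
    filter_upwards [hmono, hadd, hsmul, hcond n] with ω h1 h2 h3 h4
    have : (μ[fun ω => 1 + lam * d (n + 1) ω | ℱ n]) ω ≤ 1 := by
      rw [h2]
      simp only [Pi.add_apply, hconst, h3]
      nlinarith [mul_nonneg hlam0 (neg_nonneg.mpr h4)]
    calc (μ[Y | ℱ n]) ω ≤ _ := h1
      _ ≤ 1 := this
  -- pull out f n
  have hpull : μ[f (n + 1) | ℱ n] =ᵐ[μ] f n * μ[Y | ℱ n] := by
    rw [hfsucc]
    exact condExp_mul_of_stronglyMeasurable_left (hfm n) hfYint hYint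
  filter_upwards [hpull, hcond1] with ω h1 h2
  rw [h1]
  simp only [Pi.mul_apply]
  calc f n ω * (μ[Y | ℱ n]) ω ≤ f n ω * 1 :=
        mul_le_mul_of_nonneg_left h2 (le_of_lt (Real.exp_pos _))
    _ = f n ω := mul_one _
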